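/- For all positive real numbers a, b and all real t, |a + b·e^{2πit}| ≤ a + b − 4·min(a,b)·‖t‖², where ‖t‖ denotes the distance from t to the nearest integer. -/

import Mathlib

open Real

theorem coin_abs_bound (a b t : ℝ) (ha : 0 < a) (hb : 0 < b) :
    ‖(a : ℂ) + (b : ℂ) * Complex.exp (2 * (π : ℂ) * Complex.I * (t : ℂ))‖
      ≤ a + b - 4 * min a b * |t - round t| ^ 2 := by
  set u : ℝ := t - round t with hu
  have hu2 : |u| ≤ 1 / 2 := abs_sub_round t
  have hma : min a b ≤ a := min_le_left _ _
  have hmb : min a b ≤ b := min_le_right _ _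
  have hm0 : 0 < min a b := lt_min ha hb
  have hpi := Real.pi_pos
  have habs : 0 ≤ |u| := abs_nonneg u
  have h14 : |u| ^ 2 ≤ 1 / 4 := by nlinarith
  -- rewrite the complex number in real/imaginary form
  have hz : (a : ℂ) + (b : ℂ) * Complex.exp (2 * (π : ℂ) * Complex.I * (t : ℂ))
      = ((a + b * Real.cos (2 * π * t) : ℝ) : ℂ)
        + ((b * Real.sin (2 * π * t) : ℝ) : ℂ) * Complex.I := by
    rw [show (2 * (π : ℂ) * Complex.I * (t : ℂ)) = ((2 * π * t : ℝ) : ℂ) * Complex.I by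
      push_cast; ring, Complex.exp_mul_I, ← Complex.ofReal_cos, ← Complex.ofReal_sin]
    push_cast; ring
  rw [hz, Complex.norm_add_mul_I]
  -- cos (2πt) = cos (2πu)
  have hcos : Real.cos (2 * π * t) = Real.cos (2 * π * u) := by
    have := Real.cos_add_int_mul_two_pi (2 * π * u) (round t)
    rw [show 2 * π * u + (round t : ℝ) * (2 * π) = 2 * π * t by rw [hu]; ring] at this
    exact this
  -- Jordan's inequality: sin(π|u|) ≥ 2|u|
  have hj : 2 * |u| ≤ Real.sin (π * |u|) := by
    have h1 : (0 : ℝ) ≤ π * |u| := by positivity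
    have h2 : π * |u| ≤ π / 2 := by nlinarith
    calc 2 * |u| = 2 / π * (π * |u|) := by field_simp
      _ ≤ Real.sin (π * |u|) := Real.mul_le_sin h1 h2

  -- sin(πu)^2 = sin(π|u|)^2
  have hsq : Real.sin (π * u) ^ 2 = Real.sin (π * |u|) ^ 2 := by
    rcases abs_cases u with ⟨h, _⟩ | ⟨h, _⟩
    · rw [h]
    · rw [h, show π * -u = -(π * u) by ring, Real.sin_neg]; ring
  have hsin2 : 4 * u ^ 2 ≤ Real.sin (π * u) ^ 2 := by
    rw [hsq]
    nlinarith [sq_abs u]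
  -- cos(2πu) = 1 - 2 sin(πu)^2
  have hcos2 : Real.cos (2 * π * u) = 1 - 2 * Real.sin (π * u) ^ 2 := by
    have h1 := Real.cos_two_mul (π * u)
    have h2 := Real.sin_sq_add_cos_sq (π * u)
    rw [show 2 * π * u = 2 * (π * u) by ring]
    nlinarith
  have hR : 0 ≤ a + b - 4 * min a b * |u| ^ 2 := by
    have := mul_le_mul_of_nonneg_left h14 hm0.le
    linarith
  -- the squared modulus equals (a+b)^2 - 4ab sin(πu)^2
  have hE : (a + b * Real.cos (2 * π * t)) ^ 2 + (b * Real.sin (2 * π * t)) ^ 2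
      = (a + b) ^ 2 - 4 * a * b * Real.sin (π * u) ^ 2 := by
    have hpyth := Real.sin_sq_add_cos_sq (2 * π * t)
    have h1 : (b * Real.sin (2 * π * t)) ^ 2 = b ^ 2 * (1 - Real.cos (2 * π * t) ^ 2) := by
      rw [mul_pow, show Real.sin (2 * π * t) ^ 2 = 1 - Real.cos (2 * π * t) ^ 2 by linarith]
    rw [h1, hcos, hcos2]; ring
  have hle : (a + b * Real.cos (2 * π * t)) ^ 2 + (b * Real.sin (2 * π * t)) ^ 2
      ≤ (a + b - 4 * min a b * |u| ^ 2) ^ 2 := by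
    rw [hE, sq_abs]
    nlinarith [mul_nonneg (mul_nonneg (sub_nonneg.2 hma) hb.le) (sq_nonneg u),
      mul_nonneg (mul_nonneg (sub_nonneg.2 hmb) ha.le) (sq_nonneg u),
      sq_nonneg (min a b * u ^ 2),
      mul_nonneg (mul_nonneg ha.le hb.le)
        (by linarith : (0:ℝ) ≤ Real.sin (π * u) ^ 2 - 4 * u ^ 2),
      sq_abs u]
  calc Real.sqrt ((a + b * Real.cos (2 * π * t)) ^ 2 + (b * Real.sin (2 * π * t)) ^ 2)
      ≤ Real.sqrt ((a + b - 4 * min a b * |u| ^ 2) ^ 2) := Real.sqrt_le_sqrt hle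
    _ = a + b - 4 * min a b * |u| ^ 2 := Real.sqrt_sq hR
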